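/- Let D be a graphic sequence of nonnegative integers with entry sum S such that exactly one entry of D equals S/2 and every other entry is strictly less than S/2. Then D has a bipartite realization. -/
import Mathlib


/-- A pair of degree sequences (given as multisets) is *bigraphic* if there is a simple
bipartite graph (encoded as its set of edges between the two vertex classes) whose
degree multisets on the two sides are exactly `D1` and `D2`. -/
def BigraphicM (D1 D2 : Multiset ℕ) : Prop :=
  ∃ E : Finset (Fin (Multiset.card D1) × Fin (Multiset.card D2)),
    D1 = Finset.univ.val.map (fun u => (E.filter (fun p => p.1 = u)).card) ∧
    D2 = Finset.univ.val.map (fun v => (E.filter (fun p => p.2 = v)).card)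

open Finset in
lemma univ_val_map_get (l : List ℕ) :
    (Finset.univ.val.map (fun i : Fin l.length => l.get i)) = (l : Multiset ℕ) := by
  rw [Fin.univ_def]
  show ((List.finRange l.length).map l.get : Multiset ℕ) = (l : Multiset ℕ)
  rw [List.map_get_finRange]

open Finset in
lemma bigraphic_star (l : List ℕ) (h1 : ∀ x ∈ l, x ≤ 1) :
    BigraphicM {l.sum} (l : Multiset ℕ) := by
  have hsum : ∑ i : Fin l.length, l.get i = l.sum := by
    rw [Finset.sum]
    rw [univ_val_map_get l, Multiset.sum_coe]
  refine ⟨(Finset.univ.filter (fun p : Fin 1 × Fin l.length => l.get p.2 = 1) :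
      Finset (Fin 1 × Fin l.length)), ?_, ?_⟩
  · show ({l.sum} : Multiset ℕ) = (Finset.univ.val.map (fun u : Fin 1 =>
      ((Finset.univ.filter (fun p : Fin 1 × Fin l.length => l.get p.2 = 1)).filter
        (fun p => p.1 = u)).card))
    have huniv : (Finset.univ : Finset (Fin 1)).val = {0} := rfl
    rw [huniv, Multiset.map_singleton]
    congr 1
    rw [Finset.filter_filter]
    have : (Finset.univ.filter (fun p : Fin 1 × Fin l.length => l.get p.2 = 1 ∧ p.1 = 0))
        = Finset.univ.filter (fun p : Fin 1 × Fin l.length => l.get p.2 = 1) := by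
      apply Finset.filter_congr
      intro p _
      simp [Fin.fin_one_eq_zero p.1]
    rw [this, Finset.card_filter]
    rw [Fintype.sum_prod_type]
    simp only [Finset.sum_const, Finset.card_univ, Fintype.card_fin, one_smul]
    rw [← hsum]
    apply Finset.sum_congr rfl
    intro i _
    have := h1 l[(i:ℕ)] (List.getElem_mem i.2)
    simp only [List.get_eq_getElem]
    by_cases h : l[(i:ℕ)] = 1 <;> simp [h] <;> omega
  · show (l : Multiset ℕ) = (Finset.univ.val.map (fun v : Fin l.length =>
      ((Finset.univ.filter (fun p : Fin 1 × Fin l.length => l.get p.2 = 1)).filter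
        (fun p => p.2 = v)).card))
    rw [← univ_val_map_get l]
    apply Multiset.map_congr rfl
    intro v _
    rw [Finset.filter_filter, Finset.card_filter, Fintype.sum_prod_type]
    simp only [Finset.sum_const, Finset.card_univ, Fintype.card_fin]
    have : ∀ w : Fin l.length, (if l.get w = 1 ∧ w = v then 1 else 0)
        = if w = v then l.get v else 0 := by
      intro w
      by_cases hw : w = v
      · subst hw
        have := h1 l[(w:ℕ)] (List.getElem_mem w.2)
        simp only [List.get_eq_getElem]
        by_cases h : l[(w:ℕ)] = 1 <;> simp [h] <;> omega
      · simp [hw]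
    symm
    calc (∑ _u : Fin 1, ∑ w : Fin l.length, if l.get w = 1 ∧ w = v then 1 else 0)
        = ∑ _u : Fin 1, ∑ w : Fin l.length, if w = v then l.get v else 0 := by
          simp only [this]
      _ = l.get v := by simp

/-- A degree sequence has a bipartite realization iff its entries can be split into two
multisets forming a bigraphic pair. -/
def HasBipartiteRealization (D : Multiset ℕ) : Prop :=
  ∃ D1 D2 : Multiset ℕ, D1 + D2 = D ∧ BigraphicM D1 D2

open scoped Classical in
/-- A degree sequence is *graphic* if it is the degree multiset of a simple graph. -/
def Graphic (D : Multiset ℕ) : Prop :=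
  ∃ G : SimpleGraph (Fin (Multiset.card D)),
    D = Finset.univ.val.map (fun v => (Finset.univ.filter (fun w => G.Adj v w)).card)

/-- A graphic sequence with exactly one entry equal to half the degree sum and every
other entry strictly smaller has a bipartite realization. -/
theorem stmt15 (D : Multiset ℕ) (hg : Graphic D)
    (hone : Multiset.card (D.filter (fun d => 2 * d = D.sum)) = 1)
    (hle : ∀ d ∈ D, 2 * d ≤ D.sum) :
    HasBipartiteRealization D := by
  classical
  obtain ⟨G, hD⟩ := hg
  have hfd : ∀ v, (Finset.univ.filter (fun w => G.Adj v w)).card = G.degree v := by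
    intro v
    rw [SimpleGraph.degree, SimpleGraph.neighborFinset_eq_filter]
  -- degree sum
  have hDsum : D.sum = 2 * G.edgeFinset.card := by
    conv_lhs => rw [hD]
    rw [show (Finset.univ.val.map (fun v => (Finset.univ.filter (fun w => G.Adj v w)).card)).sum
        = ∑ v, (Finset.univ.filter (fun w => G.Adj v w)).card from rfl]
    simp only [hfd]
    exact G.sum_degrees_eq_twice_card_edges
  -- the special entry
  obtain ⟨a, ha⟩ := Multiset.card_eq_one.mp hone
  have haD : a ∈ D ∧ 2 * a = D.sum := by
    have : a ∈ D.filter (fun d => 2 * d = D.sum) := ha ▸ Multiset.mem_singleton_self a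
    exact Multiset.mem_filter.mp this
  obtain ⟨v₀, _, hv₀⟩ := Multiset.mem_map.mp (hD ▸ haD.1)
  have hdeg : G.degree v₀ = G.edgeFinset.card := by
    have := haD.2
    rw [hDsum, ← hv₀, hfd v₀] at this
    omega
  have hinc : G.incidenceFinset v₀ = G.edgeFinset := by
    apply Finset.eq_of_subset_of_card_le
    · intro e he
      rw [SimpleGraph.mem_incidenceFinset] at he
      exact SimpleGraph.mem_edgeFinset.mpr he.1
    · rw [G.card_incidenceFinset_eq_degree v₀, hdeg]
  have hadj : ∀ w : Fin (Multiset.card D), w ≠ v₀ → ∀ x, G.Adj w x → x = v₀ := by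
    intro w hw x hx
    have he : s(w, x) ∈ G.edgeFinset := SimpleGraph.mem_edgeFinset.mpr hx
    rw [← hinc, SimpleGraph.mem_incidenceFinset] at he
    have := he.2
    rw [Sym2.mem_iff] at this
    rcases this with h | h
    · exact absurd h.symm hw
    · exact h.symm
  have hdegw : ∀ w : Fin (Multiset.card D), w ≠ v₀ →
      (Finset.univ.filter (fun x => G.Adj w x)).card ≤ 1 := by
    intro w hw
    rw [Finset.card_le_one]
    intro x hx y hy
    rw [Finset.mem_filter] at hx hy
    rw [hadj w hw x hx.2, hadj w hw y hy.2]
  -- decompose D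
  set f : Fin (Multiset.card D) → ℕ :=
    fun v => (Finset.univ.filter (fun w => G.Adj v w)).card with hf
  have hu : (Finset.univ : Finset (Fin (Multiset.card D))).val
      = v₀ ::ₘ (Finset.univ.val.erase v₀) :=
    (Multiset.cons_erase (Finset.mem_univ v₀ : v₀ ∈ Finset.univ.val)).symm
  set R : Multiset ℕ := (Finset.univ.val.erase v₀).map f with hR
  have hDR : D = a ::ₘ R := by
    conv_lhs => rw [hD, hu]
    rw [Multiset.map_cons, show f v₀ = a from hv₀]
  have hR1 : ∀ x ∈ R, x ≤ 1 := by
    intro x hx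
    obtain ⟨w, hw, rfl⟩ := Multiset.mem_map.mp hx
    have hwne : w ≠ v₀ :=
      ((Finset.univ.nodup.mem_erase_iff).mp hw).1
    exact hdegw w hwne
  have hRsum : R.sum = a := by
    have h1 : D.sum = a + R.sum := by rw [hDR, Multiset.sum_cons]
    have := haD.2
    omega
  refine ⟨{a}, R, ?_, ?_⟩
  · rw [Multiset.singleton_add, hDR]
  · have hl : (R.toList : Multiset ℕ) = R := Multiset.coe_toList R
    have hls : R.toList.sum = a := by
      rw [← Multiset.sum_toList R] at hRsum
      exact hRsum
    rw [← hl, ← hls]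
    exact bigraphic_star R.toList (fun x hx => hR1 x (by rw [← hl]; exact hx))
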